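/- Let R be a commutative ring, s ∈ R, and C an R-module such that the natural map C → lim_n C/sⁿC is an isomorphism (C is s-adically separated and complete). Then C is an s-contramodule: Hom_R(R[s⁻¹], C) = 0 = Ext¹_R(R[s⁻¹], C). -/

import Mathlib

open CategoryTheory Opposite

noncomputable section SConSec

namespace SCon

variable {R : Type} [CommRing R] (s : R)

def shf : (ℕ →₀ R) →ₗ[R] (ℕ →₀ R) := Finsupp.lmapDomain R R (· + 1)

def dAux : (ℕ →₀ R) →ₗ[R] (ℕ →₀ R) := LinearMap.id - s • shf

lemma shf_apply_zero (f : ℕ →₀ R) : shf f 0 = 0 := by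
  have : (0 : ℕ) ∉ Set.range (· + 1 : ℕ → ℕ) := by simp
  simpa [shf, Finsupp.lmapDomain_apply] using Finsupp.mapDomain_notin_range f 0 this

lemma shf_apply_succ (f : ℕ →₀ R) (n : ℕ) : shf f (n + 1) = f n := by
  have hinj : Function.Injective (· + 1 : ℕ → ℕ) := fun a b h => by simpa using h
  simpa [shf, Finsupp.lmapDomain_apply] using Finsupp.mapDomain_apply hinj f n

lemma dAux_apply (f : ℕ →₀ R) (n : ℕ) : dAux s f n = f n - s * shf f n := by
  simp [dAux, Finsupp.smul_apply, smul_eq_mul]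

lemma dAux_injective : Function.Injective (dAux s) := by
  intro f g hfg
  rw [← sub_eq_zero] at hfg ⊢
  set u := f - g with hu
  rw [← map_sub] at hfg
  ext n
  induction n with
  | zero =>
    have := congrArg (fun v => v 0) hfg
    simpa [dAux_apply, shf_apply_zero, hu] using this
  | succ n ih =>
    have := congrArg (fun v => v (n + 1)) hfg
    simp only [dAux_apply, shf_apply_succ, Finsupp.coe_zero, Pi.zero_apply,
      sub_eq_zero] at this ih ⊢
    rw [this, ih, mul_zero]

def eAux (n : ℕ) : Localization.Away s :=
  IsLocalization.mk' (Localization.Away s) (1 : R) (⟨s ^ n, n, rfl⟩ : Submonoid.powers s)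

def piAux : (ℕ →₀ R) →ₗ[R] Localization.Away s :=
  Finsupp.lsum ℕ fun n => LinearMap.toSpanSingleton R _ (eAux s n)

lemma piAux_single (n : ℕ) (r : R) : piAux s (Finsupp.single n r) = r • eAux s n := by
  simp [piAux]

lemma smul_eAux (n : ℕ) : s • eAux s (n + 1) = eAux s n := by
  rw [eAux, eAux, IsLocalization.smul_mk', mul_one]
  have : (⟨s ^ (n + 1), n + 1, rfl⟩ : Submonoid.powers s)
      = (⟨s ^ n, n, rfl⟩ : Submonoid.powers s) * ⟨s, 1, pow_one s⟩ := by
    ext; simp [pow_succ]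
  rw [this]
  have := IsLocalization.mk'_cancel (S := Localization.Away s) (1 : R)
    (⟨s ^ n, n, rfl⟩ : Submonoid.powers s) (⟨s, 1, pow_one s⟩ : Submonoid.powers s)
  simpa [mul_comm] using this

lemma pow_smul_eAux (m n : ℕ) : s ^ m • eAux s (n + m) = eAux s n := by
  induction m with
  | zero => simp
  | succ m ih =>
    rw [pow_succ, mul_smul, ← Nat.add_assoc, smul_eAux, ih]

lemma eAux_zero : eAux s 0 = 1 := by
  have : (⟨s ^ 0, 0, rfl⟩ : Submonoid.powers s) = 1 := by ext; simp
  rw [eAux, this, IsLocalization.mk'_one, map_one]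

lemma pow_smul_eAux_self (n : ℕ) : s ^ n • eAux s n = 1 := by
  simpa [eAux_zero] using pow_smul_eAux s n 0

lemma piAux_comp_dAux : (piAux s) ∘ₗ (dAux s) = 0 := by
  apply Finsupp.lhom_ext
  intro n r
  simp only [LinearMap.comp_apply, LinearMap.zero_apply, dAux, LinearMap.sub_apply,
    LinearMap.smul_apply, LinearMap.id_apply, map_sub, map_smul]
  rw [show shf (Finsupp.single n r) = Finsupp.single (n + 1) r by
    simp [shf, Finsupp.lmapDomain_apply, Finsupp.mapDomain_single]]
  rw [piAux_single, piAux_single, ← smul_eAux s n]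
  rw [smul_comm]
  simp

lemma piAux_surjective : Function.Surjective (piAux s) := by
  intro x
  obtain ⟨r, t, rfl⟩ := IsLocalization.exists_mk'_eq (Submonoid.powers s) x
  obtain ⟨n, hn⟩ := t.2
  refine ⟨Finsupp.single n r, ?_⟩
  rw [piAux_single, eAux, IsLocalization.smul_mk', mul_one]
  congr 1
  exact Subtype.ext hn

lemma piAux_exact (f : ℕ →₀ R) (hf : piAux s f = 0) : ∃ g, dAux s g = f := by
  classical
  set g : ℕ → R := fun n => ∑ k ∈ Finset.range (n + 1), f k * s ^ (n - k) with hg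
  have hrec : ∀ n, g (n + 1) = s * g n + f (n + 1) := by
    intro n
    rw [hg]
    simp only
    rw [Finset.sum_range_succ, Nat.sub_self, pow_zero, mul_one, Finset.mul_sum]
    congr 1
    refine Finset.sum_congr rfl fun k hk => ?_
    have hk' : k ≤ n := Nat.lt_succ_iff.mp (Finset.mem_range.mp hk)
    rw [show n + 1 - k = (n - k) + 1 from by omega, pow_succ]
    ring
  have hbeyond : ∀ n, f.support ⊆ Finset.range (n + 1) → ∀ i, g (n + i) = s ^ i * g n := by
    intro n hsup i
    induction i with
    | zero => simp
    | succ i ih =>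
      have hzero : f (n + i + 1) = 0 := by
        by_contra hne
        have := hsup (Finsupp.mem_support_iff.mpr hne)
        rw [Finset.mem_range] at this
        omega
      rw [show n + (i + 1) = (n + i) + 1 from rfl, hrec (n + i), ih, hzero, add_zero, pow_succ]
      ring
  have key : ∀ n, f.support ⊆ Finset.range (n + 1) →
      algebraMap R (Localization.Away s) (g n) = 0 := by
    intro n hsup
    have h1 : piAux s f = ∑ k ∈ Finset.range (n + 1), f k • eAux s k := by
      rw [piAux, Finsupp.lsum_apply]
      rw [Finsupp.sum_of_support_subset f hsup _ (fun i _ => by simp)]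
      rfl
    have h2 : algebraMap R (Localization.Away s) (g n) = s ^ n • piAux s f := by
      rw [h1, Finset.smul_sum, hg]
      simp only
      rw [map_sum]
      refine Finset.sum_congr rfl fun k hk => ?_
      have hk' : k ≤ n := Nat.lt_succ_iff.mp (Finset.mem_range.mp hk)
      have he : s ^ n • eAux s k = algebraMap R (Localization.Away s) (s ^ (n - k)) := by
        calc s ^ n • eAux s k = (s ^ (n - k) * s ^ k) • eAux s k := by
              rw [← pow_add]
              congr 2
              omega
          _ = s ^ (n - k) • (s ^ k • eAux s k) := mul_smul _ _ _
          _ = s ^ (n - k) • (1 : Localization.Away s) := by rw [pow_smul_eAux_self]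
          _ = algebraMap R (Localization.Away s) (s ^ (n - k)) := by
              rw [Algebra.smul_def, mul_one]
      rw [smul_comm, he, map_mul, Algebra.smul_def]
    rw [h2, hf, smul_zero]
  set n₀ := f.support.sup id with hn₀
  have hsup : f.support ⊆ Finset.range (n₀ + 1) := fun k hk =>
    Finset.mem_range.mpr (Nat.lt_succ_of_le (Finset.le_sup (f := id) hk))
  obtain ⟨⟨u, j, hju⟩, hj⟩ :=
    (IsLocalization.map_eq_zero_iff (Submonoid.powers s) (Localization.Away s) _).mp
      (key n₀ hsup)
  simp only at hj
  rw [← hju] at hj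
  have hM : g (n₀ + j) = 0 := by rw [hbeyond n₀ hsup j, hj]
  set M := n₀ + j with hMdef
  have hsupM : f.support ⊆ Finset.range (M + 1) :=
    hsup.trans (Finset.range_subset_range.mpr (by omega))
  have hMtail : ∀ i, g (M + i) = 0 := fun i => by rw [hbeyond M hsupM i, hM, mul_zero]
  refine ⟨Finsupp.onFinset (Finset.range (M + 1)) g ?_, ?_⟩
  · intro a ha
    by_contra hmem
    have h1 : M + 1 ≤ a := by
      rw [Finset.mem_range] at hmem
      omega
    have := hMtail (a - M)
    rw [show M + (a - M) = a from by omega] at this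
    exact ha this
  · ext m
    cases m with
    | zero =>
      rw [dAux_apply, shf_apply_zero, mul_zero, sub_zero]
      show g 0 = f 0
      simp [hg]
    | succ m =>
      rw [dAux_apply, shf_apply_succ]
      show g (m + 1) - s * g m = f (m + 1)
      rw [hrec m]
      ring


section Complete

variable {C : Type} [AddCommGroup C] [Module R C]

lemma mem_smul_top (n : ℕ) (c : C) :
    s ^ n • c ∈ ((Ideal.span {s} : Ideal R) ^ n • ⊤ : Submodule R C) := by
  rw [Ideal.span_singleton_pow]
  exact Submodule.smul_mem_smul (Ideal.mem_span_singleton_self _) trivial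

lemma eq_zero_of_mem_all
    (hinj : Function.Injective (AdicCompletion.of (Ideal.span {s}) C)) (x : C)
    (hx : ∀ n, x ∈ ((Ideal.span {s} : Ideal R) ^ n • ⊤ : Submodule R C)) : x = 0 := by
  apply hinj
  rw [map_zero]
  ext n
  rw [AdicCompletion.of_apply, AdicCompletion.val_zero, Submodule.mkQ_apply]
  exact (Submodule.Quotient.mk_eq_zero _).mpr (hx n)

theorem hom_eq_zero
    (hinj : Function.Injective (AdicCompletion.of (Ideal.span {s}) C))
    (φ : Localization.Away s →ₗ[R] C) : φ = 0 := by
  ext x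
  rw [LinearMap.zero_apply]
  apply eq_zero_of_mem_all s hinj
  intro n
  have hx : s ^ n • (eAux s n * x) = x := by
    rw [← smul_mul_assoc, pow_smul_eAux_self, one_mul]
  rw [← hx, map_smul]
  exact mem_smul_top s n _

theorem exists_geom
    (hbij : Function.Bijective (AdicCompletion.of (Ideal.span {s}) C)) (b : ℕ → C) :
    ∃ c : ℕ → C, ∀ n, c n - s • c (n + 1) = b n := by
  classical
  set p : ℕ → ℕ → C := fun n m => ∑ k ∈ Finset.range m, s ^ k • b (n + k) with hp
  have hps : ∀ n m, p n (m + 1) = p n m + s ^ m • b (n + m) := fun n m =>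
    Finset.sum_range_succ _ m
  have hsp : ∀ n m, s • p (n + 1) m = p n (m + 1) - b n := by
    intro n m
    rw [hp]
    simp only
    rw [Finset.sum_range_succ']
    simp only [pow_zero, one_smul, Nat.add_zero, add_sub_cancel_right, Finset.smul_sum]
    refine Finset.sum_congr rfl fun k _ => ?_
    rw [show n + 1 + k = n + (k + 1) from by omega, ← mul_smul, ← pow_succ']
  have hcomp : ∀ n m, p n m - s • p (n + 1) m - b n = -(s ^ m • b (n + m)) := by
    intro n m
    rw [hsp n m, hps n m]
    abel
  have hyc : ∀ n, ∀ {m m'} (hmm : m ≤ m'),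
      AdicCompletion.transitionMap (Ideal.span {s}) C hmm
        (Submodule.Quotient.mk (p n m')) = Submodule.Quotient.mk (p n m) := by
    intro n m m' hmm
    show (Submodule.Quotient.mk (p n m') :
        C ⧸ ((Ideal.span {s} : Ideal R) ^ m • ⊤ : Submodule R C)) = Submodule.Quotient.mk (p n m)
    rw [Submodule.Quotient.eq]
    induction m' with
    | zero =>
      obtain rfl : m = 0 := Nat.le_zero.mp hmm
      simp
    | succ m' ih =>
      rcases Nat.lt_or_ge m (m' + 1) with hlt | hge
      · have hle : m ≤ m' := by omega
        have h1 := ih hle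
        have h2 : p n (m' + 1) - p n m' ∈
            ((Ideal.span {s} : Ideal R) ^ m • ⊤ : Submodule R C) := by
          rw [hps n m']
          simpa using Ideal.pow_le_pow_right hle |>.trans
            (le_refl _) |> fun hIJ => Submodule.smul_mono_left
              (I := (Ideal.span {s} : Ideal R) ^ m') hIJ (mem_smul_top s m' (b (n + m')))
        have := Submodule.add_mem _ h2 h1
        simpa [sub_add_sub_cancel] using this
      · obtain rfl : m = m' + 1 := by omega
        simp
  set y : ℕ → AdicCompletion (Ideal.span {s}) C := fun n =>
    ⟨fun m => Submodule.Quotient.mk (p n m), fun {m m'} hmm => hyc n hmm⟩ with hy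
  choose c hc using fun n => hbij.2 (y n)
  refine ⟨c, fun n => ?_⟩
  have hmk : ∀ n m, (Submodule.Quotient.mk (c n) :
      C ⧸ ((Ideal.span {s} : Ideal R) ^ m • ⊤ : Submodule R C)) =
      Submodule.Quotient.mk (p n m) := by
    intro n m
    exact congrArg (fun z : AdicCompletion (Ideal.span {s}) C => z.val m) (hc n)
  have hzero : AdicCompletion.of (Ideal.span {s}) C (c n - s • c (n + 1) - b n) = 0 := by
    ext m
    rw [AdicCompletion.of_apply, AdicCompletion.val_zero, Submodule.mkQ_apply]
    have e1 : c n - p n m ∈ ((Ideal.span {s} : Ideal R) ^ m • ⊤ : Submodule R C) :=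
      (Submodule.Quotient.eq _).mp (hmk n m)
    have e2 : c (n + 1) - p (n + 1) m ∈
        ((Ideal.span {s} : Ideal R) ^ m • ⊤ : Submodule R C) :=
      (Submodule.Quotient.eq _).mp (hmk (n + 1) m)
    have e3 : p n m - s • p (n + 1) m - b n ∈
        ((Ideal.span {s} : Ideal R) ^ m • ⊤ : Submodule R C) := by
      rw [hcomp n m]
      exact Submodule.neg_mem _ (mem_smul_top s m _)
    have etotal := Submodule.add_mem _
      (Submodule.sub_mem _ e1 (Submodule.smul_mem _ s e2)) e3
    rw [Pi.zero_apply, Submodule.Quotient.mk_eq_zero]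
    convert etotal using 1
    rw [smul_sub]
    abel
  have := hbij.1 (hzero.trans (map_zero (AdicCompletion.of (Ideal.span {s}) C)).symm)
  rw [← sub_eq_zero]
  simpa [sub_eq_zero, sub_sub] using this

theorem exists_lift
    (hbij : Function.Bijective (AdicCompletion.of (Ideal.span {s}) C))
    (f : (ℕ →₀ R) →ₗ[R] C) :
    ∃ g : (ℕ →₀ R) →ₗ[R] C, g ∘ₗ dAux s = f := by
  obtain ⟨c, hc⟩ := exists_geom s hbij (fun n => f (Finsupp.single n 1))
  refine ⟨Finsupp.lsum ℕ fun n => LinearMap.toSpanSingleton R _ (c n), ?_⟩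
  apply Finsupp.lhom_ext
  intro n r
  simp only [LinearMap.comp_apply, dAux, LinearMap.sub_apply, LinearMap.smul_apply,
    LinearMap.id_apply, map_sub, map_smul]
  rw [show shf (Finsupp.single n r) = Finsupp.single (n + 1) r from by
    simp [shf, Finsupp.lmapDomain_apply, Finsupp.mapDomain_single]]
  simp only [Finsupp.lsum_single, LinearMap.toSpanSingleton_apply]
  rw [smul_comm s r, ← smul_sub, hc n, ← map_smul, Finsupp.smul_single, smul_eq_mul, mul_one]

end Complete

section Cat

variable (R : Type) [CommRing R] (s : R)

def Kc : ChainComplex (ModuleCat R) ℕ where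
  X n := match n with
    | 0 => ModuleCat.of R (ℕ →₀ R)
    | 1 => ModuleCat.of R (ℕ →₀ R)
    | _ + 2 => ModuleCat.of R PUnit
  d i j := match i, j with
    | 1, 0 => ModuleCat.ofHom (dAux s)
    | _, _ => 0
  shape i j hij := by
    simp only [ComplexShape.down_Rel] at hij
    obtain _ | _ | i := i <;> obtain _ | _ | j := j <;>
      first
        | rfl
        | (exact absurd rfl hij)
  d_comp_d' i j k hij hjk := by
    simp only [ComplexShape.down_Rel] at hij hjk
    subst hij
    subst hjk
    obtain _ | k := k
    · show (0 : _ ⟶ _) ≫ _ = 0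
      simp
    · show (0 : _ ⟶ _) ≫ _ = 0
      simp

instance Kc_projective (n : ℕ) : Projective ((Kc R s).X n) := by
  obtain _ | _ | n := n
  · exact ModuleCat.projective_of_free (ι := ℕ) Finsupp.basisSingleOne
  · exact ModuleCat.projective_of_free (ι := ℕ) Finsupp.basisSingleOne
  · exact (ModuleCat.isZero_of_subsingleton
      (ModuleCat.of R PUnit)).projective

def Xobj : ModuleCat R := ModuleCat.of R (Localization.Away s)

def KcPi : Kc R s ⟶ (ChainComplex.single₀ (ModuleCat R)).obj (Xobj R s) :=
  (ChainComplex.toSingle₀Equiv _ _).symm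
    ⟨ModuleCat.ofHom (piAux s), ModuleCat.hom_ext (piAux_comp_dAux s)⟩

lemma KcPi_f_zero : (KcPi R s).f 0 = ModuleCat.ofHom (piAux s) := by
  apply ChainComplex.toSingle₀Equiv_symm_apply_f_zero

instance KcPi_quasiIso : QuasiIso (KcPi R s) := ⟨fun n => by
  cases n with
  | zero =>
    rw [ChainComplex.quasiIsoAt₀_iff, ShortComplex.quasiIso_iff_of_zeros']
    rotate_left
    · rfl
    · rfl
    · rfl
    constructor
    · rw [ShortComplex.moduleCat_exact_iff]
      intro (x : ℕ →₀ R) hx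
      have hx' : piAux s x = 0 := by
        have := congrArg (fun ψ => ψ x) (KcPi_f_zero R s)
        exact (this.symm.trans hx :)
      obtain ⟨g, hg⟩ := piAux_exact s x hx'
      exact ⟨g, hg⟩
    · have : Function.Surjective ((KcPi R s).f 0) := by
        rw [KcPi_f_zero]
        exact piAux_surjective s
      exact (ModuleCat.epi_iff_surjective _).mpr this
  | succ n =>
    rw [quasiIsoAt_iff_exactAt' _ _ (ChainComplex.exactAt_succ_single_obj _ _)]
    rw [HomologicalComplex.exactAt_iff' _ (n + 2) (n + 1) n (by simp) (by simp)]
    obtain _ | n := n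
    · rw [ShortComplex.exact_iff_mono _ rfl]
      exact (ModuleCat.mono_iff_injective _).mpr (dAux_injective s)
    · exact ShortComplex.exact_of_isZero_X₂ _
        (ModuleCat.isZero_of_subsingleton (ModuleCat.of R PUnit))⟩

def KcRes : ProjectiveResolution (Xobj R s) where
  complex := Kc R s
  π := KcPi R s

end Cat

end SCon

end SConSec


lemma SCon.subsingleton_of_isZero {R : Type} [CommRing R] {M : ModuleCat R}
    (h : CategoryTheory.Limits.IsZero M) : Subsingleton M :=
  ⟨fun a b => by
    have h1 : (𝟙 M : M ⟶ M) = 0 := h.eq_of_src _ _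
    have ha : a = (0 : M ⟶ M) a := by rw [← h1]; rfl
    have hb : b = (0 : M ⟶ M) b := by rw [← h1]; rfl
    rw [ha, hb]
    show (0 : M →ₗ[R] M) a = (0 : M →ₗ[R] M) b
    simp⟩

/-- Over a commutative ring `R`, if the natural map `C → lim_n C/sⁿC`
is an isomorphism (`C` is `s`-adically separated and complete), then `C` is an
`s`-contramodule: `Hom_R(R[s⁻¹],C) = 0 = Ext¹_R(R[s⁻¹],C)`. -/
theorem sSeparated_sComplete_implies_sContramodule
    (R : Type) [CommRing R] (s : R) (C : Type) [AddCommGroup C] [Module R C]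
    (h : Function.Bijective (AdicCompletion.of (Ideal.span {s}) C)) :
    Subsingleton (Localization.Away s →ₗ[R] C) ∧
      Subsingleton (((Ext R (ModuleCat R) 1).obj
        (op (ModuleCat.of R (Localization.Away s)))).obj (ModuleCat.of R C)) := by
  constructor
  · exact ⟨fun f g => by
      rw [SCon.hom_eq_zero s h.injective f, SCon.hom_eq_zero s h.injective g]⟩
  · apply SCon.subsingleton_of_isZero
    refine CategoryTheory.Limits.IsZero.of_iso ?_
      ((SCon.KcRes R s).isoExt 1 (ModuleCat.of R C))
    rw [← HomologicalComplex.exactAt_iff_isZero_homology]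
    rw [HomologicalComplex.exactAt_iff' _ 0 1 2 (by simp) (by simp)]
    rw [ShortComplex.moduleCat_exact_iff]
    intro (φ : (SCon.Kc R s).X 1 ⟶ ModuleCat.of R C) _
    obtain ⟨g, hg⟩ := SCon.exists_lift s h φ.hom
    refine ⟨ModuleCat.ofHom g, ?_⟩
    show (SCon.Kc R s).d 1 0 ≫ ModuleCat.ofHom g = φ
    exact ModuleCat.hom_ext hg
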